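/- With the setup of the previous lemma (polynomials 𝔭_0,...,𝔭_{ρ_s-1} in R with 𝔭_k having x_s-support contained in {k,...,ρ_s-1} and nonzero coefficient p_k of x_s^k with deg p_k = a_k), the set B = ⋃_{k=0}^{ρ_s-1} { x_1^{i_1}···x_{s-1}^{i_{s-1}} 𝔭_k : (i_1,...,i_{s-1}) <_+ (ρ_1,...,ρ_{s-1}) - a_k } is F_q-linearly independent in R. -/

import Mathlib

noncomputable instance lexLO (s : ℕ) : LinearOrder (Lex (Fin s → ℕ)) :=
  have : WellFoundedLT (Fin s) := Finite.to_wellFoundedLT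
  @Pi.Lex.linearOrder (Fin s) (fun _ => ℕ) _ this _

/-- Model of `S = F_q[X₁,…,X_{s-1}]/⟨X_i^{ρ_i}-1⟩` as the group algebra of
`∏_{i<s-1} ℤ/ρ_iℤ`. -/
abbrev QR (F : Type) [Field F] {t : ℕ} (ρ : Fin t → ℕ) : Type :=
  AddMonoidAlgebra F (∀ i : Fin t, ZMod (ρ i))

/-- Model of `R = F_q[X₁,…,X_s]/⟨X_i^{ρ_i}-1⟩` (with `ρ_s = m`), splitting off the last
variable: the group algebra of `(∏_{i<s-1} ℤ/ρ_iℤ) × ℤ/mℤ`. -/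
abbrev QRx (F : Type) [Field F] {t : ℕ} (ρ : Fin t → ℕ) (m : ℕ) : Type :=
  AddMonoidAlgebra F ((∀ i : Fin t, ZMod (ρ i)) × ZMod m)

/-- The inclusion of the subring `S = F_q[x₁,…,x_{s-1}]` into `R`. -/
noncomputable def emb (F : Type) [Field F] {t : ℕ} (ρ : Fin t → ℕ) (m : ℕ) :
    QR F ρ →+* QRx F ρ m :=
  AddMonoidAlgebra.mapDomainRingHom F (AddMonoidHom.inl _ (ZMod m))

/-- The monomial `x_s^h` in `R`. -/
noncomputable def xs (F : Type) [Field F] {t : ℕ} (ρ : Fin t → ℕ) {m : ℕ} (h : Fin m) :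
    QRx F ρ m :=
  AddMonoidAlgebra.single (0, ((h : ℕ) : ZMod m)) 1

/-- The degree of a nonzero element of `S`: the lexicographically largest exponent tuple
with nonzero coefficient. -/
noncomputable def deg {F : Type} [Field F] {t : ℕ} {ρ : Fin t → ℕ}
    (f : QR F ρ) (hf : f ≠ 0) : Fin t → ℕ :=
  ofLex (f.coeff.support.sup' (by simpa [Finsupp.support_nonempty_iff, AddMonoidAlgebra.coeff_eq_zero] using hf)
    (fun α => toLex fun i => (α i).val))

section helpers

variable {F : Type} [Field F] {t : ℕ} {ρ : Fin t → ℕ}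

lemma lexlt_iff {x y : Fin t → ℕ} :
    toLex x < toLex y ↔ ∃ i, (∀ j, j < i → x j = y j) ∧ x i < y i :=
  Iff.rfl

lemma keyB [∀ i, NeZero (ρ i)] {v a : Fin t → ℕ}
    (hva : ∀ j, v j + a j < ρ j) (w : ∀ i, ZMod (ρ i))
    (hw : toLex (fun i => (w i).val) ≤ toLex a) :
    toLex (fun j => (((v j : ℕ) : ZMod (ρ j)) + w j).val) ≤ toLex (fun j => v j + a j) := by
  have hval : ∀ j, (((v j : ℕ) : ZMod (ρ j)) + w j).val = (v j + (w j).val) % ρ j := by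
    intro j
    rw [ZMod.val_add, ZMod.val_natCast_of_lt (lt_of_le_of_lt (Nat.le_add_right _ _) (hva j))]
  rcases lt_or_eq_of_le hw with h | h
  · obtain ⟨i, hpre, hlt⟩ := lexlt_iff.mp h
    refine le_of_lt (lexlt_iff.mpr ⟨i, fun j hj => ?_, ?_⟩)
    · have hwj : (w j).val = a j := hpre j hj
      rw [hval, hwj, Nat.mod_eq_of_lt (hva j)]
    · calc (((v i : ℕ) : ZMod (ρ i)) + w i).val ≤ v i + (w i).val := by
            rw [hval]; exact Nat.mod_le _ _
        _ < v i + a i := by omega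
  · have hfe : (fun i => (w i).val) = a := congrArg ofLex h
    refine le_of_eq (congrArg toLex (funext fun j => ?_))
    rw [hval, congrFun hfe j, Nat.mod_eq_of_lt (hva j)]

lemma le_deg [∀ i, NeZero (ρ i)] {f : QR F ρ} (hf : f ≠ 0) {α} (hα : α ∈ f.coeff.support) :
    toLex (fun i => (α i).val) ≤ toLex (deg f hf) :=
  Finset.le_sup' (fun α : (∀ i, ZMod (ρ i)) => toLex fun i => (α i).val) hα

lemma deg_coeff_ne [∀ i, NeZero (ρ i)] {f : QR F ρ} (hf : f ≠ 0) :
    f.coeff (fun j => ((deg f hf j : ℕ) : ZMod (ρ j))) ≠ 0 := by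
  obtain ⟨α, hα, hEq⟩ := Finset.exists_mem_eq_sup' (s := f.coeff.support)
    (by simpa [Finsupp.support_nonempty_iff, AddMonoidAlgebra.coeff_eq_zero] using hf)
    (fun α : (∀ i, ZMod (ρ i)) => toLex fun i => (α i).val)
  have hd : deg f hf = fun i => (α i).val := congrArg ofLex hEq
  rw [hd]
  have h2 : (fun j => (((α j).val : ℕ) : ZMod (ρ j))) = α :=
    funext fun j => ZMod.natCast_rightInverse _
  rw [h2]
  exact Finsupp.mem_support_iff.mp hα

lemma coeffA {m : ℕ} [NeZero m] [∀ i, NeZero (ρ i)]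
    (q : Fin m → QR F ρ) (V g : ∀ i, ZMod (ρ i)) (c : ZMod m) :
    (AddMonoidAlgebra.single (V, (0 : ZMod m)) (1 : F) * ∑ h, emb F ρ m (q h) * xs F ρ h).coeff (g, c)
      = (q ⟨c.val, c.val_lt⟩).coeff (g - V) := by
  rw [AddMonoidAlgebra.coeff_single_mul_apply, one_mul]
  have h1 : -(V, (0 : ZMod m)) + (g, c) = (g - V, c) := by
    simp [Prod.ext_iff, neg_add_eq_sub]
  rw [h1, AddMonoidAlgebra.coeff_sum, Finsupp.finset_sum_apply]
  rw [Finset.sum_eq_single_of_mem (⟨c.val, c.val_lt⟩ : Fin m) (Finset.mem_univ _)]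
  · rw [xs, AddMonoidAlgebra.coeff_mul_single_apply, mul_one, ← sub_eq_add_neg]
    have h2 : ((g - V, c) : _ × ZMod m) - (0, ((((⟨c.val, c.val_lt⟩ : Fin m) : ℕ)) : ZMod m))
        = (g - V, 0) := by
      have : (((c.val : ℕ)) : ZMod m) = c := ZMod.natCast_rightInverse c
      simp [Prod.ext_iff, this]
    rw [h2]
    show Finsupp.mapDomain (fun a => (a, 0)) (q _).coeff (g - V, 0) = _
    exact Finsupp.mapDomain_apply (fun a b hab => by simpa [Prod.ext_iff] using hab) (q _).coeff (g - V)
  · intro h _ hne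
    rw [xs, AddMonoidAlgebra.coeff_mul_single_apply, mul_one, ← sub_eq_add_neg]
    apply Finsupp.mapDomain_notin_range
    rintro ⟨b, hb⟩
    have h2 : (0 : ZMod m) = c - ((h : ℕ) : ZMod m) := by
      simpa using congrArg Prod.snd hb
    have h3 : ((h : ℕ) : ZMod m) = c := (sub_eq_zero.mp h2.symm).symm
    apply hne
    ext
    rw [← ZMod.val_natCast_of_lt h.isLt, h3]

lemma sum_apply' {m : ℕ} {ι : Type} (s : Finset ι) (f : ι → QRx F ρ m)
    (x : (∀ i, ZMod (ρ i)) × ZMod m) :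
    (∑ j ∈ s, f j).coeff x = ∑ j ∈ s, (f j).coeff x := by
  rw [AddMonoidAlgebra.coeff_sum, Finsupp.finset_sum_apply]

lemma smul_apply'' {m : ℕ} (c : F) (f : QRx F ρ m) (x : (∀ i, ZMod (ρ i)) × ZMod m) :
    (c • f).coeff x = c * f.coeff x := rfl

end helpers

/-- With `𝔭_k = ∑_{h=k}^{ρ_s-1} p_h^{(k)} x_s^h` as before (leading `S`-coefficient
`p_k = p k k ≠ 0` of degree `a_k`), the family
`B = ⋃_k { x₁^{i₁}⋯x_{s-1}^{i_{s-1}} 𝔭_k : (i₁,…,i_{s-1}) <₊ (ρ₁,…,ρ_{s-1}) - a_k }`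
is `F_q`-linearly independent in `R`. -/
theorem linearIndependent_shifted_family {F : Type} [Field F] {t : ℕ} {ρ : Fin t → ℕ}
    {m : ℕ} [NeZero m] [∀ i, NeZero (ρ i)]
    (p : Fin m → Fin m → QR F ρ)
    (hlead : ∀ k, p k k ≠ 0)
    (hsupp : ∀ k h, h < k → p k h = 0) :
    LinearIndependent F
      (fun idx : Σ k : Fin m,
          {v : Fin t → ℕ // ∀ j, v j + deg (p k k) (hlead k) j < ρ j} =>
        AddMonoidAlgebra.single ((fun j => ((idx.2.1 j : ℕ) : ZMod (ρ j))), 0) (1 : F) *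
          ∑ h, emb F ρ m (p idx.1 h) * xs F ρ h) := by
  classical
  rw [linearIndependent_iff']
  intro s g hsum i hi
  by_contra hgi
  set s' := s.filter (fun j => g j ≠ 0) with hs'
  have hi' : i ∈ s' := Finset.mem_filter.mpr ⟨hi, hgi⟩
  obtain ⟨j₀, hj₀, hmin⟩ := Finset.exists_min_image s'
    (fun j => toLex (((j.1 : ℕ) : ℕ),
      OrderDual.toDual (toLex (fun l => j.2.1 l + deg (p j.1 j.1) (hlead j.1) l)))) ⟨i, hi'⟩
  obtain ⟨k₀, v₀, hv₀⟩ := j₀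
  set G : ∀ l, ZMod (ρ l) := fun l => ((v₀ l + deg (p k₀ k₀) (hlead k₀) l : ℕ) : ZMod (ρ l))
    with hGdef
  set c : ZMod m := ((k₀ : ℕ) : ZMod m) with hcdef
  have hcval : c.val = (k₀ : ℕ) := ZMod.val_natCast_of_lt k₀.isLt
  have hcfin : (⟨c.val, c.val_lt⟩ : Fin m) = k₀ := Fin.ext hcval
  have hGval : ∀ l, (G l).val = v₀ l + deg (p k₀ k₀) (hlead k₀) l := fun l =>
    ZMod.val_natCast_of_lt (hv₀ l)
  have happ := congrArg (fun f : QRx F ρ m => f.coeff (G, c)) hsum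
  rw [sum_apply', show (0 : QRx F ρ m).coeff (G, c) = 0 from rfl] at happ
  simp only [smul_apply''] at happ
  rw [Finset.sum_eq_single_of_mem ⟨k₀, v₀, hv₀⟩ (Finset.mem_filter.mp hj₀).1] at happ
  · -- happ : g j₀ • e j₀ (G, c) = 0
    have happ' : g ⟨k₀, ⟨v₀, hv₀⟩⟩ *
        (AddMonoidAlgebra.single ((fun j => ((v₀ j : ℕ) : ZMod (ρ j))), (0 : ZMod m)) (1 : F) *
          ∑ h, emb F ρ m (p k₀ h) * xs F ρ h).coeff (G, c) = 0 := happ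
    rw [coeffA, hcfin] at happ'
    have hGsub : G - (fun j => ((v₀ j : ℕ) : ZMod (ρ j)))
        = fun j => ((deg (p k₀ k₀) (hlead k₀) j : ℕ) : ZMod (ρ j)) := by
      funext l
      show G l - ((v₀ l : ℕ) : ZMod (ρ l)) = _
      rw [hGdef]
      push_cast
      ring
    rw [hGsub] at happ'
    have := deg_coeff_ne (hlead k₀)
    have hg0 : g ⟨k₀, v₀, hv₀⟩ ≠ 0 := (Finset.mem_filter.mp hj₀).2
    exact (mul_ne_zero hg0 this) happ'
  · rintro ⟨k, v, hv⟩ hjs hne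
    by_cases hg : g ⟨k, v, hv⟩ = 0
    · rw [hg, zero_mul]
    · have hjs' : (⟨k, v, hv⟩ : Σ k : Fin m,
          {v : Fin t → ℕ // ∀ j, v j + deg (p k k) (hlead k) j < ρ j}) ∈ s' :=
        Finset.mem_filter.mpr ⟨hjs, hg⟩
      have hle := hmin _ hjs'
      rw [Prod.Lex.le_iff] at hle
      show g ⟨k, v, hv⟩ *
        (AddMonoidAlgebra.single ((fun j => ((v j : ℕ) : ZMod (ρ j))), (0 : ZMod m)) (1 : F) *
          ∑ h, emb F ρ m (p k h) * xs F ρ h).coeff (G, c) = 0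
      rw [coeffA, hcfin]
      rcases hle with hlt | ⟨heq, hle2⟩
      · -- k₀.val < k.val
        rw [hsupp k k₀ (by exact hlt)]
        simp
      · -- k₀ = k
        have hk : k₀ = k := Fin.ext heq
        subst hk
        -- suppose coefficient nonzero
        by_contra hcne
        rw [mul_eq_zero] at hcne
        push_neg at hcne
        obtain ⟨-, hcoef⟩ := hcne
        set w : ∀ l, ZMod (ρ l) := G - (fun j => ((v j : ℕ) : ZMod (ρ j))) with hwdef
        have hwsupp : w ∈ (p k₀ k₀).coeff.support := Finsupp.mem_support_iff.mpr hcoef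
        have hwle := le_deg (hlead k₀) hwsupp
        have hkey := keyB hv w hwle
        have hGw : (fun j => (((v j : ℕ) : ZMod (ρ j)) + w j).val) = fun l => (G l).val := by
          funext l
          congr 1
          show ((v l : ℕ) : ZMod (ρ l)) + (G l - ((v l : ℕ) : ZMod (ρ l))) = G l
          ring
        rw [hGw] at hkey
        have hGveq : (fun l => (G l).val)
            = fun l => v₀ l + deg (p k₀ k₀) (hlead k₀) l := funext hGval
        rw [hGveq] at hkey
        -- hkey : toLex (v₀ + a) ≤ toLex (v + a); hle2 : reverse
        have hle2' : toLex (fun l => v l + deg (p k₀ k₀) (hlead k₀) l)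
            ≤ toLex (fun l => v₀ l + deg (p k₀ k₀) (hlead k₀) l) := hle2
        have heqlex := le_antisymm hkey hle2'
        have hveq : v₀ = v := by
          funext l
          have := congrFun (congrArg ofLex heqlex) l
          simpa using Nat.add_right_cancel this
        apply hne
        subst hveq
        rfl
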